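/- Lemma (sign and magnitude of λ_1). Let ℓ, c, α, r_y > 0 and suppose A_1 < 0 and A_1² ≥ 4B_1. Then λ_1 < 0 and B_1/(−A_1) ≤ −λ_1 ≤ 2B_1/(−A_1). In particular, there is an absolute constant K ≥ 1 such that for every ε ∈ (0,1) and D_Y > 0, if r_y := ε/D_Y ≤ ℓ, α := 1/(4(ℓ + r_y)) and c := r_y²·α/(16ℓ²), then A_1 < 0, A_1² ≥ 4B_1, and ε²/(K·ℓ²·D_Y²) ≤ −λ_1 ≤ K·ε²/(ℓ²·D_Y²). -/
import Mathlib


noncomputable section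

/-- `A₁ = ℓc − α r_y (1 + 3ℓc)`. -/
def A1 (l c α ry : ℝ) : ℝ := l * c - α * ry * (1 + 3 * l * c)

/-- `B₁ = 2 ℓ c α r_y`. -/
def B1 (l c α ry : ℝ) : ℝ := 2 * l * c * α * ry

/-- `λ₁ = (A₁ + √(A₁² − 4B₁))/2`. -/
noncomputable def lam1 (l c α ry : ℝ) : ℝ :=
  (A1 l c α ry + Real.sqrt ((A1 l c α ry) ^ 2 - 4 * B1 l c α ry)) / 2

lemma part1 (l c α ry : ℝ) (hl : 0 < l) (hc : 0 < c) (hα : 0 < α) (hry : 0 < ry)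
    (hA : A1 l c α ry < 0) (hD : (A1 l c α ry) ^ 2 ≥ 4 * B1 l c α ry) :
    lam1 l c α ry < 0 ∧
      B1 l c α ry / (-(A1 l c α ry)) ≤ -(lam1 l c α ry) ∧
      -(lam1 l c α ry) ≤ 2 * B1 l c α ry / (-(A1 l c α ry)) := by
  set A := A1 l c α ry with hAdef
  set B := B1 l c α ry with hBdef
  have hB : 0 < B := by rw [hBdef]; unfold B1; positivity
  set s := Real.sqrt (A ^ 2 - 4 * B) with hsdef
  have hs0 : 0 ≤ s := Real.sqrt_nonneg _
  have hs2 : s ^ 2 = A ^ 2 - 4 * B := Real.sq_sqrt (by linarith)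
  have hnA : 0 < -A := by linarith
  have hsA : s < -A := by nlinarith
  have hlam : lam1 l c α ry = (A + s) / 2 := rfl
  refine ⟨by rw [hlam]; linarith, ?_, ?_⟩
  · rw [hlam, div_le_iff₀ hnA]
    nlinarith
  · rw [hlam, le_div_iff₀ hnA]
    nlinarith

lemma keyLow (l c α ry : ℝ) (hry : 0 < ry) (hα8l : 1 ≤ 8 * l * α) (hα : 0 < α)
    (hAlb : -(A1 l c α ry) ≤ 2 * (α * ry)) :
    ry ^ 2 * (-(A1 l c α ry)) ≤ 16 * l * α ^ 2 * ry ^ 3 := by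
  nlinarith [mul_le_mul_of_nonneg_left hAlb (sq_nonneg ry),
    mul_nonneg (by linarith : (0:ℝ) ≤ 8 * l * α - 1)
      (by positivity : (0:ℝ) ≤ 2 * α * ry ^ 3)]

lemma keyHigh (l c α ry : ℝ) (hry : 0 < ry) (hαl : α * l ≤ 1 / 4) (hα : 0 < α)
    (hAub : A1 l c α ry ≤ -(15 / 16) * (α * ry)) :
    l * α ^ 2 * ry ^ 3 / 4 ≤ 128 * ry ^ 2 * (-(A1 l c α ry)) := by
  nlinarith [mul_le_mul_of_nonneg_left hAub (sq_nonneg ry),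
    mul_nonneg (by linarith : (0:ℝ) ≤ 1 / 4 - α * l)
      (by positivity : (0:ℝ) ≤ α * ry ^ 3),
    mul_pos hα (pow_pos hry 3)]

lemma keyAub (l c α ry : ℝ) (hl : 0 < l) (hc : 0 < c) (hα : 0 < α) (hry : 0 < ry)
    (hlc : l * c * 16 ≤ α * ry) :
    A1 l c α ry ≤ -(15 / 16) * (α * ry) := by
  have : A1 l c α ry = l * c - α * ry * (1 + 3 * l * c) := rfl
  rw [this]
  nlinarith [mul_nonneg (mul_nonneg hl.le hc.le) (mul_pos hα hry).le]

lemma keyAlb (l c α ry : ℝ) (hl : 0 < l) (hc : 0 < c) (hα : 0 < α) (hry : 0 < ry)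
    (hαry : α * ry ≤ 1 / 8) :
    -(A1 l c α ry) ≤ 2 * (α * ry) := by
  have : A1 l c α ry = l * c - α * ry * (1 + 3 * l * c) := rfl
  rw [this]
  nlinarith [mul_nonneg (mul_pos hl hc).le (mul_pos hα hry).le, mul_pos hl hc]

lemma keyD (l c α ry : ℝ) (hl : 0 < l) (hc : 0 < c) (hα : 0 < α) (hry : 0 < ry)
    (hlc : l * c * 16 ≤ α * ry)
    (hAub : A1 l c α ry ≤ -(15 / 16) * (α * ry)) :
    (A1 l c α ry) ^ 2 ≥ 4 * B1 l c α ry := by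
  have hB : B1 l c α ry = 2 * l * c * α * ry := rfl
  rw [hB]
  nlinarith [sq_nonneg (A1 l c α ry + (15 / 16) * (α * ry)),
    mul_le_mul_of_nonneg_right hlc (mul_pos hα hry).le, sq_nonneg (α * ry),
    mul_pos hα hry]

lemma part2 (l ε Dy : ℝ) (hl : 0 < l) (hε : 0 < ε) (hε1 : ε < 1) (hDy : 0 < Dy)
    (hle : ε / Dy ≤ l) (ry α c : ℝ) (hry : ry = ε / Dy)
    (hα : α = 1 / (4 * (l + ry))) (hc : c = ry ^ 2 * α / (16 * l ^ 2)) :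
    A1 l c α ry < 0 ∧ (A1 l c α ry) ^ 2 ≥ 4 * B1 l c α ry ∧
      ε ^ 2 / (128 * l ^ 2 * Dy ^ 2) ≤ -(lam1 l c α ry) ∧
      -(lam1 l c α ry) ≤ 128 * ε ^ 2 / (l ^ 2 * Dy ^ 2) := by
  have hrypos : 0 < ry := by rw [hry]; positivity
  have hryl : ry ≤ l := hry ▸ hle
  have hαpos : 0 < α := by rw [hα]; positivity
  have hcpos : 0 < c := by rw [hc]; positivity
  have hαeq : α * (4 * (l + ry)) = 1 := by rw [hα]; field_simp
  have hceq : c * (16 * l ^ 2) = ry ^ 2 * α := by rw [hc]; field_simp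
  have hεeq : ε = ry * Dy := by rw [hry]; field_simp
  have hαry : α * ry ≤ 1 / 8 := by nlinarith
  have hlc : l * c * 16 ≤ α * ry := by nlinarith
  have hα8l : 1 ≤ 8 * l * α := by nlinarith
  have hαl : α * l ≤ 1 / 4 := by nlinarith
  have hBe : B1 l c α ry = 2 * l * c * α * ry := rfl
  have hαrypos : 0 < α * ry := mul_pos hαpos hrypos
  have hAub := keyAub l c α ry hl hcpos hαpos hrypos hlc
  have hAlb := keyAlb l c α ry hl hcpos hαpos hrypos hαry
  have hA : A1 l c α ry < 0 := by nlinarith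
  have hD := keyD l c α ry hl hcpos hαpos hrypos hlc hAub
  obtain ⟨h1, h2, h3⟩ := part1 l c α ry hl hcpos hαpos hrypos hA hD
  have hnA : 0 < -(A1 l c α ry) := by linarith
  refine ⟨hA, hD, ?_, ?_⟩
  · refine le_trans ?_ h2
    rw [div_le_div_iff₀ (by positivity) hnA, hεeq]
    have hBeq : 128 * B1 l c α ry * l ^ 2 = 16 * l * α ^ 2 * ry ^ 3 := by
      rw [hBe]; linear_combination (16 * l * α * ry) * hceq
    have key : ry ^ 2 * (-(A1 l c α ry)) ≤ 128 * B1 l c α ry * l ^ 2 := by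
      rw [hBeq]; exact keyLow l c α ry hrypos hα8l hαpos hAlb
    have hfin := mul_le_mul_of_nonneg_right key (sq_nonneg Dy)
    calc (ry * Dy) ^ 2 * -(A1 l c α ry)
        = ry ^ 2 * -(A1 l c α ry) * Dy ^ 2 := by ring
      _ ≤ 128 * B1 l c α ry * l ^ 2 * Dy ^ 2 := hfin
      _ = B1 l c α ry * (128 * l ^ 2 * Dy ^ 2) := by ring
  · refine le_trans h3 ?_
    rw [div_le_div_iff₀ hnA (by positivity), hεeq]
    have hBeq : 2 * B1 l c α ry * l ^ 2 = l * α ^ 2 * ry ^ 3 / 4 := by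
      rw [hBe]; linear_combination (l * α * ry / 4) * hceq
    have key : 2 * B1 l c α ry * l ^ 2 ≤ 128 * ry ^ 2 * (-(A1 l c α ry)) := by
      rw [hBeq]; exact keyHigh l c α ry hrypos hαl hαpos hAub
    have hfin := mul_le_mul_of_nonneg_right key (sq_nonneg Dy)
    calc 2 * B1 l c α ry * (l ^ 2 * Dy ^ 2)
        = 2 * B1 l c α ry * l ^ 2 * Dy ^ 2 := by ring
      _ ≤ 128 * ry ^ 2 * -(A1 l c α ry) * Dy ^ 2 := hfin
      _ = 128 * (ry * Dy) ^ 2 * -(A1 l c α ry) := by ring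

/-- Sign and magnitude of the eigenvalue `λ₁` of the Perturbed GDA
recursion matrix on the hard GS instance. -/
theorem lam1_sign_and_magnitude :
    (∀ l c α ry : ℝ, 0 < l → 0 < c → 0 < α → 0 < ry →
      A1 l c α ry < 0 → (A1 l c α ry) ^ 2 ≥ 4 * B1 l c α ry →
      lam1 l c α ry < 0 ∧
        B1 l c α ry / (-(A1 l c α ry)) ≤ -(lam1 l c α ry) ∧
        -(lam1 l c α ry) ≤ 2 * B1 l c α ry / (-(A1 l c α ry))) ∧
    ∃ K : ℝ, 1 ≤ K ∧ ∀ l ε Dy : ℝ, 0 < l → 0 < ε → ε < 1 → 0 < Dy →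
      ε / Dy ≤ l →
      ∀ ry α c : ℝ, ry = ε / Dy → α = 1 / (4 * (l + ry)) →
        c = ry ^ 2 * α / (16 * l ^ 2) →
        A1 l c α ry < 0 ∧ (A1 l c α ry) ^ 2 ≥ 4 * B1 l c α ry ∧
        ε ^ 2 / (K * l ^ 2 * Dy ^ 2) ≤ -(lam1 l c α ry) ∧
        -(lam1 l c α ry) ≤ K * ε ^ 2 / (l ^ 2 * Dy ^ 2) := by
  refine ⟨fun l c α ry hl hc hα hry hA hD => part1 l c α ry hl hc hα hry hA hD,
    128, by norm_num, fun l ε Dy hl hε hε1 hDy hle ry α c hry hα hc =>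
      part2 l ε Dy hl hε hε1 hDy hle ry α c hry hα hc⟩
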